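/- Let A be a Lie algebroid and (U, K, Δ) an LA-Dirac triple. Then for all u ∈ Γ(U) and k ∈ Γ(K): (ρ,ρᵗ)(Δ_u k) = ⟦u, (ρ,ρᵗ)k⟧_Δ + ∇^bas_{pr_A k} u. -/
import Mathlib


/-! Algebraic model of differential geometry: the "functions" form a commutative
ℝ-algebra `R`, vector fields are `ℝ`-derivations of `R`, and one-forms are the
`R`-dual of the module of vector fields. -/

variable (R : Type*) [CommRing R] [Algebra ℝ R]

/-- Vector fields on the "manifold" with function algebra `R`. -/
abbrev VF := Derivation ℝ R R

/-- One-forms: the `R`-dual of the module of vector fields. -/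
abbrev OneForm := VF R →ₗ[R] R

variable {R}

lemma vf_bracket_smul (X Y : VF R) (f : R) :
    ⁅X, f • Y⁆ = f • ⁅X, Y⁆ + (X f) • Y := by
  ext a
  simp only [Derivation.commutator_apply, Derivation.smul_apply, smul_eq_mul,
    Derivation.leibniz, Derivation.add_apply]
  ring

/-- The differential of a function, as a one-form. -/
noncomputable def dF (f : R) : OneForm R where
  toFun X := X f
  map_add' X Y := rfl
  map_smul' r X := rfl

/-- The Lie derivative of a one-form along a vector field. -/
noncomputable def lieD (X : VF R) (θ : OneForm R) : OneForm R where
  toFun Y := X (θ Y) - θ ⁅X, Y⁆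
  map_add' Y Z := by simp only [map_add, lie_add]; ring
  map_smul' f Y := by
    simp only [map_smul, smul_eq_mul, vf_bracket_smul, map_add, Derivation.leibniz,
      RingHom.id_apply]
    ring

/-- The interior product `ι_Y (dθ)` of the exterior differential of a one-form. -/
noncomputable def iotaD (Y : VF R) (θ : OneForm R) : OneForm R where
  toFun X := Y (θ X) - X (θ Y) - θ ⁅Y, X⁆
  map_add' X Z := by simp only [map_add, lie_add, Derivation.add_apply]; ring
  map_smul' f X := by
    simp only [map_smul, smul_eq_mul, vf_bracket_smul, map_add, Derivation.leibniz,
      Derivation.smul_apply, RingHom.id_apply]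
    ring

/-- The Courant–Dorfman bracket on sections of `TM ⊕ T*M`. -/
noncomputable def cbracket (e₁ e₂ : VF R × OneForm R) : VF R × OneForm R :=
  (⁅e₁.1, e₂.1⁆, lieD e₁.1 e₂.2 - iotaD e₂.1 e₁.2)

/-- The canonical symmetric pairing on sections of `TM ⊕ T*M`. -/
noncomputable def cpair (e₁ e₂ : VF R × OneForm R) : R := e₁.2 e₂.1 + e₂.2 e₁.1

/-- A Lie algebroid (in the algebraic section model): an `R`-module `A` with a Lie
bracket on sections and an anchor `ρ : A → TM` satisfying the Leibniz rule and
preserving brackets. -/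
structure LieAlgebroid (R : Type*) [CommRing R] [Algebra ℝ R]
    (A : Type*) [AddCommGroup A] [Module R A] where
  bracket : A → A → A
  bracket_add_left : ∀ a b c, bracket (a + b) c = bracket a c + bracket b c
  bracket_add_right : ∀ a b c, bracket a (b + c) = bracket a b + bracket a c
  skew : ∀ a b, bracket a b = - bracket b a
  jacobi : ∀ a b c,
    bracket a (bracket b c) = bracket (bracket a b) c + bracket b (bracket a c)
  anchor : A →ₗ[R] VF R
  leibniz : ∀ a (f : R) b, bracket a (f • b) = f • bracket a b + (anchor a f) • b
  anchor_bracket : ∀ a b, anchor (bracket a b) = ⁅anchor a, anchor b⁆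

variable {A : Type*} [AddCommGroup A] [Module R A]

/-- The pairing of the degenerate Courant algebroid `A ⊕ T*M`:
`⟨(a₁,θ₁),(a₂,θ₂)⟩_d = θ₂(ρ a₁) + θ₁(ρ a₂)`. -/
noncomputable def dpair (L : LieAlgebroid R A) (τ₁ τ₂ : A × OneForm R) : R :=
  τ₂.2 (L.anchor τ₁.1) + τ₁.2 (L.anchor τ₂.1)

/-- The bracket of the degenerate Courant algebroid `A ⊕ T*M`:
`[(a₁,θ₁),(a₂,θ₂)]_d = ([a₁,a₂], L_{ρ a₁} θ₂ − ι_{ρ a₂} dθ₁)`. -/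
noncomputable def dbracket (L : LieAlgebroid R A) (τ₁ τ₂ : A × OneForm R) :
    A × OneForm R :=
  (L.bracket τ₁.1 τ₂.1, lieD (L.anchor τ₁.1) τ₂.2 - iotaD (L.anchor τ₂.1) τ₁.2)

/-- The canonical pairing between `TM ⊕ A*` and `A ⊕ T*M`: `⟨(X,α),(a,θ)⟩ = α(a) + θ(X)`. -/
noncomputable def mixPair (ν : VF R × (A →ₗ[R] R)) (τ : A × OneForm R) : R :=
  ν.2 τ.1 + τ.2 ν.1

/-- A Dorfman connection `Δ : Γ(TM ⊕ A*) × Γ(A ⊕ T*M) → Γ(A ⊕ T*M)` relative to the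
anchor `pr_TM` and the canonical pairing. -/
structure DorfmanConn (R : Type*) [CommRing R] [Algebra ℝ R]
    (A : Type*) [AddCommGroup A] [Module R A] where
  conn : (VF R × (A →ₗ[R] R)) → (A × OneForm R) → (A × OneForm R)
  add_left : ∀ ν₁ ν₂ τ, conn (ν₁ + ν₂) τ = conn ν₁ τ + conn ν₂ τ
  add_right : ∀ ν τ₁ τ₂, conn ν (τ₁ + τ₂) = conn ν τ₁ + conn ν τ₂
  /-- `Δ_ν` is a derivation over `pr_TM(ν)`. -/
  leibniz : ∀ ν (f : R) τ, conn ν (f • τ) = f • conn ν τ + (ν.1 f) • τ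
  /-- `Δ_{fν} τ = f Δ_ν τ + ⟨ν,τ⟩ · (0, df)`. -/
  smul_left : ∀ (f : R) ν τ,
    conn (f • ν) τ = f • conn ν τ + (mixPair ν τ) • ((0 : A), dF f)
  /-- `Δ_ν (0, df) = (0, d(pr_TM(ν) f))`. -/
  conn_d : ∀ ν (f : R), conn ν ((0 : A), dF f) = ((0 : A), dF (ν.1 f))


/-- The map `(ρ, ρᵗ) : A ⊕ T*M → TM ⊕ A*`, `(a,θ) ↦ (ρ(a), θ ∘ ρ)`. -/
noncomputable def rr (L : LieAlgebroid R A) (τ : A × OneForm R) :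
    VF R × (A →ₗ[R] R) :=
  (L.anchor τ.1, τ.2 ∘ₗ L.anchor)


/-- `Ω_ν a = Δ_ν (a,0) − (0, d⟨ν,(a,0)⟩)`. -/
noncomputable def Omga (Dc : DorfmanConn R A) (ν : VF R × (A →ₗ[R] R)) (a : A) :
    A × OneForm R :=
  Dc.conn ν (a, 0) - ((0 : A), dF (ν.2 a))


/-- The Lie derivative `L_a` on `Γ(A ⊕ T*M)`: `L_a (a',θ) = ([a,a'], L_{ρ(a)} θ)`. -/
noncomputable def lieTau (L : LieAlgebroid R A) (a : A) (τ : A × OneForm R) :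
    A × OneForm R :=
  (L.bracket a τ.1, lieD (L.anchor a) τ.2)


/-- The Lie algebroid Lie derivative of a section of `A*` along a section of `A`. -/
noncomputable def lieADual (L : LieAlgebroid R A) (a : A) (α : A →ₗ[R] R) :
    A →ₗ[R] R where
  toFun b := L.anchor a (α b) - α (L.bracket a b)
  map_add' b c := by simp only [map_add, L.bracket_add_right]; ring
  map_smul' f b := by
    simp only [map_smul, smul_eq_mul, L.leibniz, map_add, Derivation.leibniz,
      RingHom.id_apply]
    ring


/-- The Lie derivative `L_a` on `Γ(TM ⊕ A*)`: `L_a (X,α) = ([ρ(a),X], L_a α)`. -/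
noncomputable def lieNu (L : LieAlgebroid R A) (a : A) (ν : VF R × (A →ₗ[R] R)) :
    VF R × (A →ₗ[R] R) :=
  (⁅L.anchor a, ν.1⁆, lieADual L a ν.2)


/-- The basic connection `∇^bas : Γ(A) × Γ(TM ⊕ A*) → Γ(TM ⊕ A*)`,
`∇^bas_a ν = (ρ,ρᵗ)(Ω_ν a) + L_a ν`. -/
noncomputable def nbasA (L : LieAlgebroid R A) (Dc : DorfmanConn R A) (a : A)
    (ν : VF R × (A →ₗ[R] R)) : VF R × (A →ₗ[R] R) :=
  rr L (Omga Dc ν a) + lieNu L a ν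


/-- The basic curvature `R^bas_Δ ∈ Ω²(A, Hom(TM ⊕ A*, A ⊕ T*M))`. -/
noncomputable def Rbas (L : LieAlgebroid R A) (Dc : DorfmanConn R A) (a₁ a₂ : A)
    (ν : VF R × (A →ₗ[R] R)) : A × OneForm R :=
  - Omga Dc ν (L.bracket a₁ a₂) + lieTau L a₁ (Omga Dc ν a₂)
    - lieTau L a₂ (Omga Dc ν a₁)
    + Omga Dc (nbasA L Dc a₂ ν) a₁ - Omga Dc (nbasA L Dc a₁ ν) a₂

/-- Let `A` be a Lie algebroid and `(U, K = U°, Δ)` an LA-Dirac triple: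
`K = U°` is the annihilator of `U` in `A ⊕ T*M`; `(ρ,ρᵗ)(K) ⊆ U`; the dull bracket
`⟦·,·⟧_Δ` dual to `Δ` (with anchor `pr_TM`) restricts to a Lie algebroid bracket on
`Γ(U)`; the basic connection `∇^bas_a` preserves `Γ(U)`; and `R^bas_Δ(a,b)u ∈ Γ(K)`.
Then for all `u ∈ Γ(U)` and `k ∈ Γ(K)`:
`(ρ,ρᵗ)(Δ_u k) = ⟦u, (ρ,ρᵗ)k⟧_Δ + ∇^bas_{pr_A k} u`. -/
theorem la_dirac_morphism_identity (R : Type*) [CommRing R] [Algebra ℝ R]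
    {A : Type*} [AddCommGroup A] [Module R A]
    (L : LieAlgebroid R A) (Dc : DorfmanConn R A)
    (U : Submodule R (VF R × (A →ₗ[R] R)))
    (db : (VF R × (A →ₗ[R] R)) → (VF R × (A →ₗ[R] R)) → (VF R × (A →ₗ[R] R)))
    -- `db` is the dull bracket dual to `Δ`:
    (hdb : ∀ ν₁ ν₂ τ,
      mixPair (db ν₁ ν₂) τ = ν₁.1 (mixPair ν₂ τ) - mixPair ν₂ (Dc.conn ν₁ τ))
    -- `db` is anchored by `pr_TM`:
    (hdb_anchor : ∀ ν₁ ν₂, (db ν₁ ν₂).1 = ⁅ν₁.1, ν₂.1⁆)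
    -- `(ρ,ρᵗ)(K) ⊆ U` where `K = U°`:
    (hKU : ∀ τ : A × OneForm R, (∀ u ∈ U, mixPair u τ = 0) → rr L τ ∈ U)
    -- `(U, pr_TM, ⟦·,·⟧_Δ|_U)` is a Lie algebroid:
    (hU_closed : ∀ u ∈ U, ∀ u' ∈ U, db u u' ∈ U)
    (hU_skew : ∀ u ∈ U, ∀ u' ∈ U, db u u' = - db u' u)
    (hU_jacobi : ∀ u ∈ U, ∀ u' ∈ U, ∀ u'' ∈ U,
      db u (db u' u'') = db (db u u') u'' + db u' (db u u''))
    -- `∇^bas_a` preserves `Γ(U)`: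
    (hnbas : ∀ (a : A), ∀ u ∈ U, nbasA L Dc a u ∈ U)
    -- `R^bas_Δ(a,b)u ∈ Γ(K)`:
    (hRbas : ∀ (a b : A), ∀ u ∈ U, ∀ u' ∈ U, mixPair u' (Rbas L Dc a b u) = 0) :
    ∀ u ∈ U, ∀ k : A × OneForm R, (∀ u' ∈ U, mixPair u' k = 0) →
      rr L (Dc.conn u k) = db u (rr L k) + nbasA L Dc k.1 u := by
  intro u hu k hk
  refine Prod.ext ?_ ?_
  · -- first components: vector field equality, test on f ∈ R
    ext f
    have ha := hdb_anchor u (rr L ((0 : A), dF f))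
    have hb := hdb_anchor u (rr L k)
    simp only [rr, dF, map_zero, lie_zero] at ha hb
    have h1 := hdb u (rr L ((0 : A), dF f)) k
    have h2 := hdb u (rr L ((0 : A), dF f)) (k.1, (0 : OneForm R))
    simp only [rr, mixPair, dF, nbasA, Omga, lieNu, Prod.fst_add, Prod.snd_add,
      Prod.fst_sub, Prod.snd_sub, Prod.fst_zero, Prod.snd_zero, map_zero,
      LinearMap.zero_apply, LinearMap.coe_mk, AddHom.coe_mk, LinearMap.coe_comp,
      Function.comp_apply, map_sub, map_add, sub_zero, add_zero, zero_add,
      Derivation.add_apply, Derivation.coe_add, lie_zero, ha] at h1 h2 ⊢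
    have hE : (db u (L.anchor k.1, k.2 ∘ₗ L.anchor)).1 f
        + (⁅L.anchor k.1, u.1⁆ : VF R) f = 0 := by
      rw [hb]
      simp only [Derivation.commutator_apply]
      ring
    linear_combination h1 - h2 - hE
  · -- second components: linear map equality on A, test on a ∈ A
    ext a
    have h1 := hdb u (L.anchor a, (0 : A →ₗ[R] R)) k
    have h2 := hdb u (L.anchor a, (0 : A →ₗ[R] R)) (k.1, (0 : OneForm R))
    have h3 := hdb u (rr L k) (a, (0 : OneForm R))
    have h4 := hk (nbasA L Dc a u) (hnbas a u hu)
    have ha1 := hdb_anchor u (L.anchor a, (0 : A →ₗ[R] R))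
    have hsk := L.skew a k.1
    simp only [rr, mixPair, dF, nbasA, Omga, lieNu, lieADual, Prod.fst_add,
      Prod.snd_add, Prod.fst_sub, Prod.snd_sub, Prod.fst_zero, Prod.snd_zero,
      map_zero, LinearMap.zero_apply, LinearMap.coe_mk, AddHom.coe_mk,
      LinearMap.coe_comp, Function.comp_apply, map_sub, map_add, sub_zero,
      add_zero, zero_add, Derivation.add_apply, LinearMap.add_apply,
      LinearMap.sub_apply, ha1, hsk, map_neg] at h1 h2 h3 h4 ⊢
    have hsk2 : k.2 ⁅L.anchor a, u.1⁆ = - k.2 ⁅u.1, L.anchor a⁆ := by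
      rw [← lie_skew]
      exact map_neg k.2 _
    linear_combination h1 - h2 - h3 + h4 - hsk2
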